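/- The traveling wave solution ρ₁(t,x) = ρ_{1,0}(x − ct) of the Transport–Stokes system, with ρ_{1,0} = 1_{B(0,1)}/|B(0,1)| and c = −(4/15)e₃, is unstable in the 1-Wasserstein metric: there exists ε > 0 such that for every η > 0 there is an initial probability density ρ̄₀ ∈ L∞ with W₁(ρ̄₀, ρ_{1,0}) < η whose solution ρ̄ satisfies W₁(ρ̄(t), ρ₁(t)) > ε for all sufficiently large t. -/

import Mathlib

open MeasureTheory Real Filter

noncomputable abbrev E3 := EuclideanSpace ℝ (Fin 3)

noncomputable def W1 (μ ν : E3 → ℝ) : ℝ :=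
  ⨆ f : {f : E3 → ℝ // LipschitzWith 1 f}, |(∫ x, f.1 x * μ x) - ∫ x, f.1 x * ν x|

noncomputable def ω₁ : ℝ := (volume (Metric.ball (0:E3) 1)).toReal

noncomputable def cTS : E3 := (-(4/15 : ℝ)) • (EuclideanSpace.single (2 : Fin 3) (1:ℝ))

/-- normalized spherical patch of radius R -/
noncomputable def patch (R : ℝ) : E3 → ℝ :=
  fun x => Set.indicator (Metric.ball (0:E3) R) 1 x / (volume (Metric.ball (0:E3) R)).toReal

/-- traveling-wave solution of radius R at time t -/
noncomputable def ρR (R t : ℝ) : E3 → ℝ :=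
  fun x => (R ^ 3)⁻¹ *
    (Set.indicator (Metric.ball (0:E3) 1) 1 (R⁻¹ • x - (t / (ω₁ * R ^ 2)) • cTS) / ω₁)

/-! ### Auxiliary lemmas -/

lemma omega_pos : 0 < ω₁ :=
  ENNReal.toReal_pos (Metric.measure_ball_pos volume 0 one_pos).ne' measure_ball_lt_top.ne

lemma finrank_E3 : Module.finrank ℝ E3 = 3 := by
  simp [finrank_euclideanSpace_fin]

lemma vol_ball (a : E3) {r : ℝ} (hr : 0 ≤ r) :
    (volume (Metric.ball a r)).toReal = r ^ 3 * ω₁ := by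
  rw [Measure.addHaar_ball volume a hr, ENNReal.toReal_mul,
    ENNReal.toReal_ofReal (by positivity), finrank_E3, ω₁]

lemma intBall (f : E3 → ℝ) (hf : Continuous f) (a : E3) (r : ℝ) :
    Integrable (Set.indicator (Metric.ball a r) f) := by
  rw [integrable_indicator_iff measurableSet_ball]
  exact ((hf.continuousOn.integrableOn_compact (isCompact_closedBall a r))).mono_set
    Metric.ball_subset_closedBall

lemma massBall (a : E3) {r : ℝ} (hr : 0 ≤ r) :
    ∫ x, Set.indicator (Metric.ball a r) (fun _ => (1:ℝ)) x = r ^ 3 * ω₁ := by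
  rw [show (fun _ => (1:ℝ)) = (1 : E3 → ℝ) from rfl,
    integral_indicator_one measurableSet_ball, measureReal_def, vol_ball a hr]

noncomputable def f₃ : E3 → ℝ := fun x => x 2

lemma abs_coord_le (x : E3) : |x 2| ≤ ‖x‖ := by
  rw [EuclideanSpace.norm_eq]
  have : |x 2| = Real.sqrt (‖x 2‖ ^ 2) := by
    rw [Real.sqrt_sq_eq_abs]; simp
  rw [this]
  apply Real.sqrt_le_sqrt
  exact Finset.single_le_sum (f := fun i => ‖x i‖ ^ 2)
    (fun i _ => by positivity) (Finset.mem_univ 2)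

lemma f3_cont : Continuous f₃ := (EuclideanSpace.proj (2 : Fin 3) : E3 →L[ℝ] ℝ).continuous

lemma f3_lip : LipschitzWith 1 f₃ := by
  apply LipschitzWith.of_dist_le_mul
  intro x y
  rw [NNReal.coe_one, one_mul, Real.dist_eq, dist_eq_norm]
  exact abs_coord_le (x - y)

lemma odd_int {r : ℝ} :
    ∫ x, Set.indicator (Metric.ball (0:E3) r) f₃ x = 0 := by
  have h2 : ∀ x : E3, Set.indicator (Metric.ball (0:E3) r) f₃ (-x)
      = - Set.indicator (Metric.ball (0:E3) r) f₃ x := by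
    intro x
    by_cases hx : x ∈ Metric.ball (0:E3) r
    · have hx' : -x ∈ Metric.ball (0:E3) r := by
        simpa [Metric.mem_ball] using hx
      rw [Set.indicator_of_mem hx, Set.indicator_of_mem hx']
      show (-x) 2 = -(x 2); simp
    · have hx' : -x ∉ Metric.ball (0:E3) r := by
        simpa [Metric.mem_ball] using hx
      simp [Set.indicator_of_notMem hx, Set.indicator_of_notMem hx']
  have h1 : ∫ x, Set.indicator (Metric.ball (0:E3) r) f₃ (-x)
      = ∫ x, Set.indicator (Metric.ball (0:E3) r) f₃ x := integral_neg_eq_self _ _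
  simp only [h2, integral_neg] at h1
  linarith

lemma coordBall (a : E3) {r : ℝ} (hr : 0 ≤ r) :
    ∫ x, Set.indicator (Metric.ball a r) f₃ x = r ^ 3 * ω₁ * a 2 := by
  have key : ∀ x : E3, Set.indicator (Metric.ball a r) f₃ (x + a)
      = Set.indicator (Metric.ball (0:E3) r) f₃ x
        + Set.indicator (Metric.ball (0:E3) r) (fun _ => a 2) x := by
    intro x
    by_cases hx : x ∈ Metric.ball (0:E3) r
    · have hx' : x + a ∈ Metric.ball a r := by
        simpa [Metric.mem_ball, dist_eq_norm] using hx
      rw [Set.indicator_of_mem hx', Set.indicator_of_mem hx, Set.indicator_of_mem hx]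
      show (x + a) 2 = x 2 + a 2; rfl
    · have hx' : x + a ∉ Metric.ball a r := by
        simpa [Metric.mem_ball, dist_eq_norm] using hx
      simp [Set.indicator_of_notMem hx, Set.indicator_of_notMem hx']
  calc ∫ x, Set.indicator (Metric.ball a r) f₃ x
      = ∫ x, Set.indicator (Metric.ball a r) f₃ (x + a) :=
        (integral_add_right_eq_self _ a).symm
    _ = ∫ x, (Set.indicator (Metric.ball (0:E3) r) f₃ x
        + Set.indicator (Metric.ball (0:E3) r) (fun _ => a 2) x) := by
        simp only [key]
    _ = (∫ x, Set.indicator (Metric.ball (0:E3) r) f₃ x)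
        + ∫ x, Set.indicator (Metric.ball (0:E3) r) (fun _ => a 2) x :=
        integral_add (intBall _ f3_cont _ _) (intBall _ continuous_const _ _)
    _ = r ^ 3 * ω₁ * a 2 := by
        rw [odd_int]
        have : (fun x : E3 => Set.indicator (Metric.ball (0:E3) r) (fun _ => a 2) x)
            = fun x => a 2 * Set.indicator (Metric.ball (0:E3) r) (fun _ => (1:ℝ)) x := by
          funext x
          by_cases hx : x ∈ Metric.ball (0:E3) r <;>
            simp [Set.indicator_of_mem, Set.indicator_of_notMem, hx]
        rw [this, integral_const_mul, massBall 0 hr]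
        ring

lemma cTS_apply : cTS 2 = -(4/15) := by
  simp [cTS, EuclideanSpace.single_apply]

/-- center of the ball at time t for radius R -/
noncomputable def ctr (R t : ℝ) : E3 := (t / (ω₁ * R)) • cTS

lemma ctr_apply (R t : ℝ) : (ctr R t) 2 = (t / (ω₁ * R)) * (-(4/15)) := by
  have : (ctr R t) 2 = (t / (ω₁ * R)) * cTS 2 := rfl
  rw [this, cTS_apply]

lemma rho_eq (R t : ℝ) (hR : 0 < R) : ρR R t =
    fun x => (R ^ 3 * ω₁)⁻¹ *
      Set.indicator (Metric.ball (ctr R t) R) (fun _ => (1:ℝ)) x := by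
  funext x
  have harg : R⁻¹ • x - (t / (ω₁ * R ^ 2)) • cTS = R⁻¹ • (x - ctr R t) := by
    rw [ctr, smul_sub, smul_smul]
    congr 2
    field_simp
  have hmem : (R⁻¹ • x - (t / (ω₁ * R ^ 2)) • cTS ∈ Metric.ball (0:E3) 1)
      ↔ x ∈ Metric.ball (ctr R t) R := by
    rw [harg, Metric.mem_ball, Metric.mem_ball, dist_zero_right, dist_eq_norm,
      norm_smul, norm_inv, Real.norm_eq_abs, abs_of_pos hR]
    rw [inv_mul_lt_one₀ hR]
  show (R ^ 3)⁻¹ * (Set.indicator _ 1 _ / ω₁) = _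
  by_cases hx : x ∈ Metric.ball (ctr R t) R
  · rw [Set.indicator_of_mem (hmem.mpr hx), Set.indicator_of_mem hx]
    simp [mul_inv]
    ring
  · rw [Set.indicator_of_notMem (fun h => hx (hmem.mp h)), Set.indicator_of_notMem hx]
    simp

lemma patch_eq (R : ℝ) (hR : 0 < R) : patch R =
    fun x => (R ^ 3 * ω₁)⁻¹ *
      Set.indicator (Metric.ball (0:E3) R) (fun _ => (1:ℝ)) x := by
  funext x
  rw [patch, vol_ball 0 hR.le, div_eq_inv_mul]
  rfl

lemma mul_ind (f : E3 → ℝ) (c : ℝ) (s : Set E3) (x : E3) :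
    f x * (c * Set.indicator s (fun _ => (1:ℝ)) x) = c * Set.indicator s f x := by
  by_cases hx : x ∈ s <;> simp [hx, Set.indicator_of_mem, Set.indicator_of_notMem] <;> ring

lemma ind_const (c : ℝ) (s : Set E3) :
    (fun x => Set.indicator s (fun _ => c) x)
      = fun x => c * Set.indicator s (fun _ => (1:ℝ)) x := by
  funext x
  by_cases hx : x ∈ s <;> simp [hx]

lemma abs_int_le (f : E3 → ℝ) (hf : LipschitzWith 1 f) (a : E3) {r : ℝ} (hr : 0 < r) :
    |(r ^ 3 * ω₁)⁻¹ * (∫ x, Set.indicator (Metric.ball a r) f x) - f 0| ≤ ‖a‖ + r := by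
  have hfc := hf.continuous
  have hvol : (0:ℝ) < r ^ 3 * ω₁ := by
    have := omega_pos; positivity
  have split : (fun x => Set.indicator (Metric.ball a r) f x)
      = fun x => Set.indicator (Metric.ball a r) (fun y => f y - f 0) x
        + Set.indicator (Metric.ball a r) (fun _ => f 0) x := by
    funext x
    by_cases hx : x ∈ Metric.ball a r <;> simp [hx]
  have hint : ∫ x, Set.indicator (Metric.ball a r) f x
      = (∫ x, Set.indicator (Metric.ball a r) (fun y => f y - f 0) x) + r ^ 3 * ω₁ * f 0 := by
    rw [split, integral_add (intBall _ (by continuity) _ _) (intBall _ continuous_const _ _),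
      ind_const, integral_const_mul, massBall a hr.le]
    ring
  have key : |∫ x, Set.indicator (Metric.ball a r) (fun y => f y - f 0) x|
      ≤ r ^ 3 * ω₁ * (‖a‖ + r) := by
    calc |∫ x, Set.indicator (Metric.ball a r) (fun y => f y - f 0) x|
        ≤ ∫ x, |Set.indicator (Metric.ball a r) (fun y => f y - f 0) x| := by
          have h := norm_integral_le_integral_norm
              (fun x => Set.indicator (Metric.ball a r) (fun y => f y - f 0) x)
              (μ := volume)
          simpa [Real.norm_eq_abs] using h
      _ ≤ ∫ x, Set.indicator (Metric.ball a r) (fun _ => ‖a‖ + r) x := by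
          apply integral_mono
          · exact (intBall _ (by continuity) a r).abs
          · exact intBall _ continuous_const a r
          · intro x
            simp only []
            by_cases hx : x ∈ Metric.ball a r
            · rw [Set.indicator_of_mem hx, Set.indicator_of_mem hx]
              have h1 : dist (f x) (f 0) ≤ 1 * dist x 0 := hf.dist_le_mul x 0
              rw [Real.dist_eq, one_mul, dist_zero_right] at h1
              have h2 : ‖x‖ ≤ ‖a‖ + r := by
                have := Metric.mem_ball.mp hx
                have h3 : dist x 0 ≤ dist x a + dist a 0 := dist_triangle _ _ _
                rw [dist_zero_right, dist_zero_right] at h3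
                linarith
              exact h1.trans h2
            · have h0 : (0:ℝ) ≤ ‖a‖ + r := by positivity
              simpa [hx] using h0
      _ = r ^ 3 * ω₁ * (‖a‖ + r) := by
          rw [ind_const, integral_const_mul, massBall a hr.le]; ring
  simp only [hint]
  rw [mul_add, abs_le]
  constructor
  · have := (abs_le.mp key).1
    have h4 : (r ^ 3 * ω₁)⁻¹ * (r ^ 3 * ω₁ * f 0) = f 0 := by
      rw [← mul_assoc, inv_mul_cancel₀ hvol.ne', one_mul]
    rw [h4]
    have h6 : (r ^ 3 * ω₁)⁻¹ * ∫ x, Set.indicator (Metric.ball a r) (fun y => f y - f 0) x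
        ≥ (r ^ 3 * ω₁)⁻¹ * (-(r ^ 3 * ω₁ * (‖a‖ + r))) :=
      mul_le_mul_of_nonneg_left this (by positivity)
    have h5 : (r ^ 3 * ω₁)⁻¹ * (-(r ^ 3 * ω₁ * (‖a‖ + r))) = -(‖a‖ + r) := by
      rw [mul_neg, ← mul_assoc, inv_mul_cancel₀ hvol.ne', one_mul]
    linarith [h5, h6]
  · have := (abs_le.mp key).2
    have h4 : (r ^ 3 * ω₁)⁻¹ * (r ^ 3 * ω₁ * f 0) = f 0 := by
      rw [← mul_assoc, inv_mul_cancel₀ hvol.ne', one_mul]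
    rw [h4]
    have h6 : (r ^ 3 * ω₁)⁻¹ * ∫ x, Set.indicator (Metric.ball a r) (fun y => f y - f 0) x
        ≤ (r ^ 3 * ω₁)⁻¹ * (r ^ 3 * ω₁ * (‖a‖ + r)) :=
      mul_le_mul_of_nonneg_left this (by positivity)
    have h5 : (r ^ 3 * ω₁)⁻¹ * (r ^ 3 * ω₁ * (‖a‖ + r)) = ‖a‖ + r := by
      rw [← mul_assoc, inv_mul_cancel₀ hvol.ne', one_mul]
    linarith [h5, h6]

lemma int_patch (f : E3 → ℝ) (R : ℝ) (hR : 0 < R) :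
    ∫ x, f x * patch R x
      = ω₁⁻¹ * ∫ u, Set.indicator (Metric.ball (0:E3) 1) (fun v => f (R • v)) u := by
  have h1 : ∀ x : E3, f x * patch R x
      = (R ^ 3 * ω₁)⁻¹ *
        Set.indicator (Metric.ball (0:E3) 1) (fun v => f (R • v)) (R⁻¹ • x) := by
    intro x
    rw [patch_eq R hR, mul_ind]
    congr 1
    by_cases hx : x ∈ Metric.ball (0:E3) R
    · have hx' : R⁻¹ • x ∈ Metric.ball (0:E3) 1 := by
        rw [Metric.mem_ball, dist_zero_right, norm_smul, norm_inv, Real.norm_eq_abs,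
          abs_of_pos hR, inv_mul_lt_one₀ hR]
        simpa [Metric.mem_ball, dist_zero_right] using hx
      rw [Set.indicator_of_mem hx, Set.indicator_of_mem hx']
      rw [smul_inv_smul₀ hR.ne']
    · have hx' : R⁻¹ • x ∉ Metric.ball (0:E3) 1 := by
        rw [Metric.mem_ball, dist_zero_right, norm_smul, norm_inv, Real.norm_eq_abs,
          abs_of_pos hR, inv_mul_lt_one₀ hR]
        simpa [Metric.mem_ball, dist_zero_right] using hx
      rw [Set.indicator_of_notMem hx, Set.indicator_of_notMem hx']
  calc ∫ x, f x * patch R x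
      = ∫ x, (R ^ 3 * ω₁)⁻¹ *
          Set.indicator (Metric.ball (0:E3) 1) (fun v => f (R • v)) (R⁻¹ • x) := by
        simp only [h1]
    _ = R ^ 3 * ∫ u, (R ^ 3 * ω₁)⁻¹ *
          Set.indicator (Metric.ball (0:E3) 1) (fun v => f (R • v)) u := by
        have := Measure.integral_comp_inv_smul_of_nonneg (volume : Measure E3)
          (fun u => (R ^ 3 * ω₁)⁻¹ *
            Set.indicator (Metric.ball (0:E3) 1) (fun v => f (R • v)) u) hR.le
        rw [finrank_E3] at this
        simpa [smul_eq_mul] using this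
    _ = ω₁⁻¹ * ∫ u, Set.indicator (Metric.ball (0:E3) 1) (fun v => f (R • v)) u := by
        have hsc : R ^ 3 * (R ^ 3 * ω₁)⁻¹ = ω₁⁻¹ := by
          rw [mul_inv, ← mul_assoc, mul_inv_cancel₀ (by positivity : (R:ℝ) ^ 3 ≠ 0), one_mul]
        rw [integral_const_mul, ← mul_assoc, hsc]

lemma patch_close (f : E3 → ℝ) (hf : LipschitzWith 1 f) (R : ℝ) (hR : 0 < R) :
    |(∫ x, f x * patch R x) - ∫ x, f x * patch 1 x| ≤ |R - 1| := by
  have hfc := hf.continuous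
  rw [int_patch f R hR, int_patch f 1 one_pos]
  have hsub : ∀ u : E3, Set.indicator (Metric.ball (0:E3) 1) (fun v => f (R • v)) u
      - Set.indicator (Metric.ball (0:E3) 1) (fun v => f ((1:ℝ) • v)) u
      = Set.indicator (Metric.ball (0:E3) 1) (fun v => f (R • v) - f v) u := by
    intro u
    by_cases hu : u ∈ Metric.ball (0:E3) 1 <;> simp [hu]
  have hRcont : Continuous fun v : E3 => f (R • v) := hfc.comp (continuous_const_smul R)
  have hint1 := intBall (fun v => f (R • v)) hRcont (0:E3) 1
  have hint2 := intBall (fun v => f ((1:ℝ) • v)) (by simpa using hfc) (0:E3) 1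
  rw [← mul_sub, ← integral_sub hint1 hint2]
  simp only [hsub]
  have key : |∫ u, Set.indicator (Metric.ball (0:E3) 1) (fun v => f (R • v) - f v) u|
      ≤ ω₁ * |R - 1| := by
    calc |∫ u, Set.indicator (Metric.ball (0:E3) 1) (fun v => f (R • v) - f v) u|
        ≤ ∫ u, |Set.indicator (Metric.ball (0:E3) 1) (fun v => f (R • v) - f v) u| := by
          have h := norm_integral_le_integral_norm
            (fun u => Set.indicator (Metric.ball (0:E3) 1) (fun v => f (R • v) - f v) u)
            (μ := volume)
          simpa [Real.norm_eq_abs] using h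
      _ ≤ ∫ u, Set.indicator (Metric.ball (0:E3) 1) (fun _ => |R - 1|) u := by
          apply integral_mono
          · exact (intBall _ (hRcont.sub hfc) 0 1).abs
          · exact intBall _ continuous_const 0 1
          · intro u
            simp only []
            by_cases hu : u ∈ Metric.ball (0:E3) 1
            · rw [Set.indicator_of_mem hu, Set.indicator_of_mem hu]
              have h1 : dist (f (R • u)) (f u) ≤ 1 * dist (R • u) u := hf.dist_le_mul _ _
              rw [Real.dist_eq, one_mul, dist_eq_norm] at h1
              have h2 : R • u - u = (R - 1) • u := by
                rw [sub_smul, one_smul]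
              rw [h2, norm_smul, Real.norm_eq_abs] at h1
              have h3 : ‖u‖ ≤ 1 := by
                have := Metric.mem_ball.mp hu
                rw [dist_zero_right] at this
                linarith
              calc |f (R • u) - f u| ≤ |R - 1| * ‖u‖ := h1
                _ ≤ |R - 1| * 1 := by
                    exact mul_le_mul_of_nonneg_left h3 (abs_nonneg _)
                _ = |R - 1| := mul_one _
            · have h0 : (0:ℝ) ≤ |R - 1| := abs_nonneg _
              simp [hu]
      _ = ω₁ * |R - 1| := by
          rw [ind_const, integral_const_mul, massBall 0 (zero_le_one)]
          ring
  rw [abs_mul, abs_of_pos (inv_pos.mpr omega_pos)]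
  calc ω₁⁻¹ * |∫ u, Set.indicator (Metric.ball (0:E3) 1) (fun v => f (R • v) - f v) u|
      ≤ ω₁⁻¹ * (ω₁ * |R - 1|) :=
        mul_le_mul_of_nonneg_left key (inv_nonneg.mpr omega_pos.le)
    _ = |R - 1| := by
        rw [← mul_assoc, inv_mul_cancel₀ omega_pos.ne', one_mul]

lemma int_f_rho (f : E3 → ℝ) (hf : Continuous f) (R t : ℝ) (hR : 0 < R) :
    ∫ x, f x * ρR R t x
      = (R ^ 3 * ω₁)⁻¹ * ∫ x, Set.indicator (Metric.ball (ctr R t) R) f x := by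
  rw [rho_eq R t hR]
  simp only [mul_ind]
  rw [integral_const_mul]

lemma int_f3_rho (R t : ℝ) (hR : 0 < R) :
    ∫ x, f₃ x * ρR R t x = (t / (ω₁ * R)) * (-(4/15)) := by
  have hv : R ^ 3 * ω₁ ≠ 0 := by
    have := omega_pos; positivity
  rw [int_f_rho f₃ f3_cont R t hR, coordBall (ctr R t) hR.le, ctr_apply,
    ← mul_assoc, inv_mul_cancel₀ hv, one_mul]

lemma W1_patch_le (R : ℝ) (hR : 0 < R) : W1 (patch R) (patch 1) ≤ |R - 1| :=
  Real.iSup_le (fun f => patch_close f.1 f.2 R hR) (abs_nonneg _)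

lemma bddW (R t : ℝ) (hR : 0 < R) :
    BddAbove (Set.range fun f : {f : E3 → ℝ // LipschitzWith 1 f} =>
      |(∫ x, f.1 x * ρR R t x) - ∫ x, f.1 x * ρR 1 t x|) := by
  refine ⟨(‖ctr R t‖ + R) + (‖ctr 1 t‖ + 1), ?_⟩
  rintro y ⟨f, rfl⟩
  have h1 := abs_int_le f.1 f.2 (ctr R t) hR
  have h2 := abs_int_le f.1 f.2 (ctr 1 t) one_pos
  simp only []
  rw [int_f_rho f.1 f.2.continuous R t hR, int_f_rho f.1 f.2.continuous 1 t one_pos]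
  set A := (R ^ 3 * ω₁)⁻¹ * ∫ x, Set.indicator (Metric.ball (ctr R t) R) f.1 x with hA
  set B := ((1:ℝ) ^ 3 * ω₁)⁻¹ * ∫ x, Set.indicator (Metric.ball (ctr 1 t) 1) f.1 x with hB
  have : |A - B| ≤ |A - f.1 0| + |B - f.1 0| := by
    have := abs_sub (A - f.1 0) (B - f.1 0)
    simpa [sub_sub_sub_cancel_right] using this
  exact this.trans (add_le_add h1 h2)

/-- instability of the traveling wave ρ₁ in the 1-Wasserstein metric,
for any solution concept `TS` for which the explicit traveling waves ρ_R are the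
solutions with spherical patch initial data. -/
theorem stmt5
    (TS : (E3 → ℝ) → (ℝ → E3 → ℝ) → Prop)
    (hTW : ∀ R : ℝ, 0 < R → TS (patch R) (fun t => ρR R t)) :
    ∃ ε > 0, ∀ η > 0, ∃ ρ₀ : E3 → ℝ, ∃ σ : ℝ → E3 → ℝ,
      TS ρ₀ σ ∧ (∀ x, 0 ≤ ρ₀ x) ∧ (∫ x, ρ₀ x = 1) ∧ (∃ C, ∀ x, ρ₀ x ≤ C) ∧
      W1 ρ₀ (patch 1) < η ∧ ∃ T, ∀ t ≥ T, ε < W1 (σ t) (ρR 1 t) := by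
  refine ⟨1, one_pos, ?_⟩
  intro η hη
  set δ : ℝ := min η 1 / 2 with hδdef
  have hδpos : 0 < δ := by
    have : 0 < min η 1 := lt_min hη one_pos
    positivity
  have hδη : δ < η := by
    have h1 : min η 1 ≤ η := min_le_left _ _
    have : δ ≤ η / 2 := by
      rw [hδdef]; linarith
    linarith
  set R : ℝ := 1 + δ with hRdef
  have hR : 0 < R := by rw [hRdef]; linarith
  have hω := omega_pos
  refine ⟨patch R, fun t => ρR R t, hTW R hR, ?_, ?_, ?_, ?_, ?_⟩
  · -- nonneg
    intro x
    exact div_nonneg (Set.indicator_nonneg (fun _ _ => zero_le_one) x) ENNReal.toReal_nonneg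
  · -- mass one
    have : ∫ x, patch R x
        = (R ^ 3 * ω₁)⁻¹ * ∫ x, Set.indicator (Metric.ball (0:E3) R) (fun _ => (1:ℝ)) x := by
      rw [patch_eq R hR, integral_const_mul]
    rw [this, massBall 0 hR.le, inv_mul_cancel₀ (by positivity)]
  · -- bounded
    refine ⟨(R ^ 3 * ω₁)⁻¹, fun x => ?_⟩
    rw [patch_eq R hR]
    have hind : Set.indicator (Metric.ball (0:E3) R) (fun _ => (1:ℝ)) x ≤ 1 := by
      by_cases hx : x ∈ Metric.ball (0:E3) R <;> simp [hx]
    calc (R ^ 3 * ω₁)⁻¹ * Set.indicator (Metric.ball (0:E3) R) (fun _ => (1:ℝ)) x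
        ≤ (R ^ 3 * ω₁)⁻¹ * 1 := by
          exact mul_le_mul_of_nonneg_left hind (by positivity)
      _ = (R ^ 3 * ω₁)⁻¹ := mul_one _
  · -- W1 close
    have h := W1_patch_le R hR
    have : |R - 1| = δ := by
      rw [hRdef, add_sub_cancel_left, abs_of_pos hδpos]
    rw [this] at h
    exact lt_of_le_of_lt h hδη
  · -- instability
    refine ⟨4 * ω₁ * R / δ, fun t ht => ?_⟩
    have hF3 : |(∫ x, f₃ x * ρR R t x) - ∫ x, f₃ x * ρR 1 t x|
        = |(t / (ω₁ * R)) * (-(4/15)) - (t / (ω₁ * 1)) * (-(4/15))| := by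
      rw [int_f3_rho R t hR, int_f3_rho 1 t one_pos]
    have hval : (t / (ω₁ * R)) * (-(4/15)) - (t / (ω₁ * 1)) * (-(4/15))
        = 4 * t * δ / (15 * ω₁ * R) := by
      rw [hRdef]
      field_simp
      ring
    have htpos : 4 * ω₁ * R / δ ≤ t := ht
    have hkey : 1 < 4 * t * δ / (15 * ω₁ * R) := by
      rw [lt_div_iff₀ (by positivity)]
      have h1 : 4 * ω₁ * R ≤ t * δ := by
        rw [div_le_iff₀ hδpos] at htpos
        linarith
      nlinarith [mul_pos hω hR]
    have hle : 4 * t * δ / (15 * ω₁ * R)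
        ≤ |(∫ x, f₃ x * ρR R t x) - ∫ x, f₃ x * ρR 1 t x| := by
      rw [hF3, hval]
      exact le_abs_self _
    have hsup : |(∫ x, f₃ x * ρR R t x) - ∫ x, f₃ x * ρR 1 t x|
        ≤ W1 (ρR R t) (ρR 1 t) := by
      exact le_ciSup (bddW R t hR) (⟨f₃, f3_lip⟩ : {f : E3 → ℝ // LipschitzWith 1 f})
    calc (1:ℝ) < 4 * t * δ / (15 * ω₁ * R) := hkey
      _ ≤ _ := hle.trans hsup
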